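/- For any reals 0 < ε < 1 and any sequence (ψ(k))_{k≥1} of positive reals, and positive integers (σ_1,...,σ_n) with exp((1−ε)ψ(k)) ≤ σ_k ≤ exp((1+ε)ψ(k)) for 1 ≤ k ≤ n, the set J_n(σ_1,...,σ_n) = ⋃ { I_{n+1}(σ_1,...,σ_n,σ) : exp((1−ε)ψ(n+1)) ≤ σ ≤ exp((1+ε)ψ(n+1)) } has Lebesgue measure at most exp( −(1−ε)ψ(n+1) − 2(1−ε) ∑_{k=1}^n ψ(k) ). -/

import Mathlib

open MeasureTheory

/-- The Gauss map. -/
noncomputable def gaussMap (x : ℝ) : ℝ := Int.fract x⁻¹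

/-- The n-th partial quotient (n ≥ 1) of the continued fraction expansion. -/
noncomputable def cfDigit (x : ℝ) (n : ℕ) : ℕ := ⌊(gaussMap^[n - 1] x)⁻¹⌋₊

/-- The fundamental interval J_n(σ_1,...,σ_n): the union of all cylinders of
order n+1 extending (σ_1,...,σ_n) by a digit σ with
exp((1−ε)ψ(n+1)) ≤ σ ≤ exp((1+ε)ψ(n+1)). -/
def cfJ (n : ℕ) (σ : ℕ → ℕ) (ε : ℝ) (ψ : ℕ → ℝ) : Set ℝ :=
  {x | x ∈ Set.Ico (0 : ℝ) 1 ∧ (∀ i, 1 ≤ i → i ≤ n → cfDigit x i = σ i) ∧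
    Real.exp ((1 - ε) * ψ (n + 1)) ≤ (cfDigit x (n + 1) : ℝ) ∧
    (cfDigit x (n + 1) : ℝ) ≤ Real.exp ((1 + ε) * ψ (n + 1))}

private lemma prod_Icc_shift {M : Type*} [CommMonoid M] (f : ℕ → M) (n : ℕ) :
    ∏ k ∈ Finset.Icc 1 (n + 1), f k = f 1 * ∏ k ∈ Finset.Icc 1 n, f (k + 1) := by
  induction n with
  | zero => simp
  | succ n ih =>
      rw [Finset.prod_Icc_succ_top (by omega) f, ih,
        Finset.prod_Icc_succ_top (by omega) (fun k => f (k + 1)), mul_assoc]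

private lemma cfL (T : ℝ) (hT : 1 ≤ T) :
    ∀ n (a : ℕ → ℕ), (∀ k, 1 ≤ k → k ≤ n → 1 ≤ a k) →
    volume {x : ℝ | x ∈ Set.Ico (0:ℝ) 1 ∧ (∀ i, 1 ≤ i → i ≤ n → cfDigit x i = a i) ∧
      T ≤ (cfDigit x (n+1) : ℝ)} ≤
    ENNReal.ofReal (T⁻¹ * ∏ k ∈ Finset.Icc 1 n, ((a k : ℝ)⁻¹)^2) := by
  have hT0 : (0:ℝ) < T := lt_of_lt_of_le one_pos hT
  intro n
  induction n with
  | zero =>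
      intro a _
      have hsub : {x : ℝ | x ∈ Set.Ico (0:ℝ) 1 ∧ (∀ i, 1 ≤ i → i ≤ 0 → cfDigit x i = a i) ∧
          T ≤ (cfDigit x (0+1) : ℝ)} ⊆ Set.Ioc 0 T⁻¹ := by
        rintro x ⟨⟨hx0, _⟩, _, hTx⟩
        have hd : cfDigit x 1 = ⌊x⁻¹⌋₊ := rfl
        rw [hd] at hTx
        have hx0' : 0 ≤ x⁻¹ := inv_nonneg.mpr hx0
        have h1 : (1:ℝ) ≤ x⁻¹ := by
          have h1' : 1 ≤ ⌊x⁻¹⌋₊ := by exact_mod_cast le_trans hT hTx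
          exact le_trans (by exact_mod_cast h1') (Nat.floor_le hx0')
        have hxpos : 0 < x := by
          rcases lt_or_eq_of_le hx0 with h | h
          · exact h
          · exfalso; rw [← h, inv_zero] at h1; linarith
        have hTle : T ≤ x⁻¹ := le_trans hTx (Nat.floor_le hx0')
        refine ⟨hxpos, ?_⟩
        calc x = (x⁻¹)⁻¹ := (inv_inv x).symm
          _ ≤ T⁻¹ := by
            apply inv_anti₀ hT0 hTle
      calc volume _ ≤ volume (Set.Ioc (0:ℝ) T⁻¹) := measure_mono hsub
        _ = ENNReal.ofReal (T⁻¹ - 0) := Real.volume_Ioc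
        _ ≤ ENNReal.ofReal (T⁻¹ * ∏ k ∈ Finset.Icc 1 0, ((a k : ℝ)⁻¹)^2) := by simp
  | succ n ih =>
      intro a ha
      set a' : ℕ → ℕ := fun k => a (k + 1) with ha'def
      have ha1 : 1 ≤ a 1 := ha 1 le_rfl (by omega)
      have ha1R : (1:ℝ) ≤ (a 1 : ℝ) := by exact_mod_cast ha1
      set E : Set ℝ := {x : ℝ | x ∈ Set.Ico (0:ℝ) 1 ∧
        (∀ i, 1 ≤ i → i ≤ n → cfDigit x i = a' i) ∧ T ≤ (cfDigit x (n+1) : ℝ)} with hEdef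
      set g : ℝ → ℝ := fun y => ((a 1 : ℝ) + y)⁻¹ with hgdef
      -- inclusion into the image
      have hsub : {x : ℝ | x ∈ Set.Ico (0:ℝ) 1 ∧ (∀ i, 1 ≤ i → i ≤ n+1 → cfDigit x i = a i) ∧
          T ≤ (cfDigit x (n+1+1) : ℝ)} ⊆ g '' E := by
        rintro x ⟨⟨hx0, hx1⟩, hdig, hTx⟩
        have h1 : cfDigit x 1 = a 1 := hdig 1 le_rfl (by omega)
        have hd : cfDigit x 1 = ⌊x⁻¹⌋₊ := rfl
        have hx0' : 0 ≤ x⁻¹ := inv_nonneg.mpr hx0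
        have hfl : ⌊x⁻¹⌋₊ = a 1 := by rw [← hd, h1]
        have h1inv : (1:ℝ) ≤ x⁻¹ := by
          have : (a 1 : ℝ) ≤ x⁻¹ := by
            rw [← hfl]; exact Nat.floor_le hx0'
          linarith
        have hxpos : 0 < x := by
          rcases lt_or_eq_of_le hx0 with h | h
          · exact h
          · exfalso; rw [← h, inv_zero] at h1inv; linarith
        set y := gaussMap x with hydef
        have hyIco : y ∈ Set.Ico (0:ℝ) 1 := ⟨Int.fract_nonneg _, Int.fract_lt_one _⟩
        have hcast : ((⌊x⁻¹⌋₊ : ℝ)) = ((⌊x⁻¹⌋ : ℤ) : ℝ) :=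
          natCast_floor_eq_intCast_floor hx0'
        have hxy : x⁻¹ = (a 1 : ℝ) + y := by
          have hy' : y = x⁻¹ - ((⌊x⁻¹⌋ : ℤ) : ℝ) := by
            rw [hydef]; rfl
          rw [hy', ← hcast, hfl]; ring
        have hgx : g y = x := by
          rw [hgdef]; simp only
          rw [← hxy, inv_inv]
        have hdig' : ∀ i, 1 ≤ i → i ≤ n → cfDigit y i = a' i := by
          intro i hi1 hin
          obtain ⟨m, rfl⟩ : ∃ m, i = m + 1 := ⟨i - 1, by omega⟩
          have : cfDigit y (m+1) = cfDigit x (m+2) := by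
            simp only [cfDigit, Nat.add_sub_cancel]
            rw [show (m + 2 - 1) = m + 1 from rfl, Function.iterate_succ_apply]
          rw [this]
          exact hdig (m+2) (by omega) (by omega)
        have hlast : cfDigit y (n+1) = cfDigit x (n+2) := by
          simp only [cfDigit, Nat.add_sub_cancel]
          rw [show (n + 2 - 1) = n + 1 from rfl, Function.iterate_succ_apply]
        refine ⟨y, ⟨hyIco, hdig', ?_⟩, hgx⟩
        rw [hlast]; exact hTx
      -- Lipschitz bound
      set K : NNReal := Real.toNNReal (((a 1 : ℝ))⁻¹ ^ 2) with hKdef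
      have hLip : LipschitzOnWith K g (Set.Ici (0:ℝ)) := by
        apply LipschitzOnWith.of_dist_le_mul
        intro u hu v hv
        have hu0 : (0:ℝ) ≤ u := hu
        have hv0 : (0:ℝ) ≤ v := hv
        have hau : (1:ℝ) ≤ (a 1 : ℝ) + u := by linarith
        have hav : (1:ℝ) ≤ (a 1 : ℝ) + v := by linarith
        have hne_u : ((a 1 : ℝ) + u) ≠ 0 := by linarith
        have hne_v : ((a 1 : ℝ) + v) ≠ 0 := by linarith
        have key : g u - g v = (v - u) / (((a 1 : ℝ) + u) * ((a 1 : ℝ) + v)) := by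
          rw [hgdef]; field_simp; ring
        have hKcoe : (K : ℝ) = ((a 1 : ℝ))⁻¹ ^ 2 := Real.coe_toNNReal _ (by positivity)
        have hP : (0:ℝ) < ((a 1 : ℝ) + u) * ((a 1 : ℝ) + v) := by positivity
        have h2 : (a 1 : ℝ) * (a 1 : ℝ) ≤ ((a 1 : ℝ) + u) * ((a 1 : ℝ) + v) := by nlinarith
        have habs : |((a 1 : ℝ) + u) * ((a 1 : ℝ) + v)| = ((a 1 : ℝ) + u) * ((a 1 : ℝ) + v) :=
          abs_of_pos hP
        calc dist (g u) (g v)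
            = |v - u| / (((a 1 : ℝ) + u) * ((a 1 : ℝ) + v)) := by
              rw [Real.dist_eq, key, abs_div, habs]
          _ ≤ |v - u| / ((a 1 : ℝ) * (a 1 : ℝ)) :=
              div_le_div_of_nonneg_left (abs_nonneg _) (by positivity) h2
          _ = (K:ℝ) * dist u v := by
              rw [hKcoe, Real.dist_eq, abs_sub_comm v u, div_eq_mul_inv, mul_inv, sq]
              ring
      have hEsub : E ⊆ Set.Ici (0:ℝ) := fun y hy => hy.1.1
      have himg : volume (g '' E) ≤ (K : ENNReal) * volume E := by
        have h1 : μH[1] (g '' E) ≤ (K : ENNReal) ^ (1:ℝ) * μH[1] E :=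
          (hLip.mono hEsub).hausdorffMeasure_image_le zero_le_one
        rw [hausdorffMeasure_real] at h1
        simpa using h1
      have hIH := ih a' (fun k hk1 hkn => ha (k+1) (by omega) (by omega))
      calc volume _ ≤ volume (g '' E) := measure_mono hsub
        _ ≤ (K : ENNReal) * volume E := himg
        _ ≤ (K : ENNReal) * ENNReal.ofReal (T⁻¹ * ∏ k ∈ Finset.Icc 1 n, ((a' k : ℝ)⁻¹)^2) :=
            mul_le_mul_right hIH _
        _ = ENNReal.ofReal (T⁻¹ * ∏ k ∈ Finset.Icc 1 (n+1), ((a k : ℝ)⁻¹)^2) := by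
            have hK' : (K : ENNReal) = ENNReal.ofReal (((a 1 : ℝ))⁻¹ ^ 2) := rfl
            rw [hK', ← ENNReal.ofReal_mul (by positivity)]
            congr 1
            rw [prod_Icc_shift (fun k => ((a k : ℝ)⁻¹)^2) n]
            ring

/-- Measure bound for J_n(σ_1,...,σ_n). -/
theorem cfJ_measure_le (ε : ℝ) (hε0 : 0 < ε) (hε1 : ε < 1)
    (ψ : ℕ → ℝ) (hψpos : ∀ k, 1 ≤ k → 0 < ψ k)
    (n : ℕ) (hn : 1 ≤ n) (σ : ℕ → ℕ)
    (hσ : ∀ k, 1 ≤ k → k ≤ n →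
      Real.exp ((1 - ε) * ψ k) ≤ (σ k : ℝ) ∧ (σ k : ℝ) ≤ Real.exp ((1 + ε) * ψ k)) :
    volume (cfJ n σ ε ψ) ≤
      ENNReal.ofReal
        (Real.exp (-(1 - ε) * ψ (n + 1) - 2 * (1 - ε) * ∑ k ∈ Finset.Icc 1 n, ψ k)) := by
  set T : ℝ := Real.exp ((1 - ε) * ψ (n + 1)) with hTdef
  have hT : 1 ≤ T := by
    rw [hTdef]
    apply Real.one_le_exp
    have := hψpos (n+1) (by omega)
    nlinarith
  have ha : ∀ k, 1 ≤ k → k ≤ n → 1 ≤ σ k := by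
    intro k hk1 hkn
    have h := (hσ k hk1 hkn).1
    have h0 : (0:ℝ) < (σ k : ℝ) := lt_of_lt_of_le (Real.exp_pos _) h
    exact Nat.cast_pos.mp h0
  have hsub : cfJ n σ ε ψ ⊆ {x : ℝ | x ∈ Set.Ico (0:ℝ) 1 ∧
      (∀ i, 1 ≤ i → i ≤ n → cfDigit x i = σ i) ∧ T ≤ (cfDigit x (n+1) : ℝ)} := by
    rintro x ⟨h1, h2, h3, _⟩
    exact ⟨h1, h2, h3⟩
  have hmain := cfL T hT n σ ha
  refine le_trans (le_trans (measure_mono hsub) hmain) (ENNReal.ofReal_le_ofReal ?_)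
  have hrhs : Real.exp (-(1 - ε) * ψ (n + 1) - 2 * (1 - ε) * ∑ k ∈ Finset.Icc 1 n, ψ k)
      = T⁻¹ * ∏ k ∈ Finset.Icc 1 n, Real.exp (-(2 * (1 - ε)) * ψ k) := by
    rw [← Real.exp_sum]
    rw [hTdef, ← Real.exp_neg, ← Real.exp_add]
    congr 1
    rw [← Finset.mul_sum]
    ring
  rw [hrhs]
  apply mul_le_mul_of_nonneg_left _ (by positivity)
  apply Finset.prod_le_prod
  · intro k _; positivity
  · intro k hk
    rw [Finset.mem_Icc] at hk
    have h := (hσ k hk.1 hk.2).1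
    have hexp : (0:ℝ) < Real.exp ((1 - ε) * ψ k) := Real.exp_pos _
    have hinv : ((σ k : ℝ))⁻¹ ≤ Real.exp (-((1 - ε) * ψ k)) := by
      rw [Real.exp_neg]
      exact inv_anti₀ hexp h
    calc ((σ k : ℝ))⁻¹ ^ 2 ≤ Real.exp (-((1 - ε) * ψ k)) ^ 2 := by
          apply pow_le_pow_left₀ (by positivity) hinv
      _ = Real.exp (-(2 * (1 - ε)) * ψ k) := by
          rw [sq, ← Real.exp_add]; congr 1; ring
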